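/- (Jacobi triple product, exponential form.) For every s > 0 and every real x, the absolutely convergent series ∑_{n∈ℤ} e^{i n x} · e^{-n² s} equals the convergent infinite product ∏_{m=1}^∞ (1 - e^{-2ms}) · (1 + 2 cos(x) e^{-(2m-1)s} + e^{-(4m-2)s}). -/

import Mathlib

open Finset Filter Topology

namespace JTP

variable {t q : ℝ}

def F (t : ℝ) (n : ℕ) : ℝ := ∏ i ∈ Finset.range n, (1 - t ^ (i + 1))

noncomputable def B (t : ℝ) (n k : ℕ) : ℝ :=
  if k ≤ n then F t n / (F t k * F t (n - k)) else 0

lemma F_zero : F t 0 = 1 := by simp [F]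

lemma F_succ (n : ℕ) : F t (n + 1) = F t n * (1 - t ^ (n + 1)) := by
  simp [F, Finset.prod_range_succ]

lemma one_sub_pow_pos (h0 : 0 < t) (h1 : t < 1) (n : ℕ) : 0 < 1 - t ^ (n + 1) := by
  have : t ^ (n + 1) < 1 := pow_lt_one₀ h0.le h1 (Nat.succ_ne_zero n)
  linarith

lemma F_pos (h0 : 0 < t) (h1 : t < 1) (n : ℕ) : 0 < F t n :=
  Finset.prod_pos fun i _ => one_sub_pow_pos h0 h1 i

lemma F_le_one (h0 : 0 < t) (h1 : t < 1) (n : ℕ) : F t n ≤ 1 := by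
  induction n with
  | zero => simp [F_zero]
  | succ n ih =>
    rw [F_succ]
    have h2 : 0 < t ^ (n + 1) := pow_pos h0 _
    nlinarith [F_pos h0 h1 n, one_sub_pow_pos h0 h1 n]

lemma F_antitone (h0 : 0 < t) (h1 : t < 1) : Antitone (F t) := by
  refine antitone_nat_of_succ_le fun n => ?_
  rw [F_succ]
  have h2 : 0 < t ^ (n + 1) := pow_pos h0 _
  nlinarith [F_pos h0 h1 n]

lemma B_zero_right (h0 : 0 < t) (h1 : t < 1) (n : ℕ) : B t n 0 = 1 := by
  rw [B, if_pos (Nat.zero_le n)]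
  rw [F_zero, Nat.sub_zero, one_mul, div_self (F_pos h0 h1 n).ne']

lemma B_self (h0 : 0 < t) (h1 : t < 1) (n : ℕ) : B t n n = 1 := by
  rw [B, if_pos le_rfl, Nat.sub_self, F_zero, mul_one, div_self (F_pos h0 h1 n).ne']

lemma B_eq_zero {n k : ℕ} (h : n < k) : B t n k = 0 := by
  simp [B, Nat.not_le.mpr h]

lemma B_nonneg (h0 : 0 < t) (h1 : t < 1) (n k : ℕ) : 0 ≤ B t n k := by
  unfold B
  split
  · exact div_nonneg (F_pos h0 h1 _).le (mul_nonneg (F_pos h0 h1 _).le (F_pos h0 h1 _).le)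
  · exact le_refl 0

lemma B_le (h0 : 0 < t) (h1 : t < 1) {c : ℝ} (hc : 0 < c) (hcF : ∀ m, c ≤ F t m)
    (n k : ℕ) : B t n k ≤ 1 / (c * c) := by
  unfold B
  split
  · apply div_le_div₀ (by positivity) (F_le_one h0 h1 n) (by positivity)
    exact mul_le_mul (hcF k) (hcF (n - k)) hc.le (F_pos h0 h1 k).le
  · positivity

lemma pascal1 (h0 : 0 < t) (h1 : t < 1) (n k : ℕ) :
    B t (n + 1) (k + 1) = B t n (k + 1) + t ^ (n - k) * B t n k := by
  rcases lt_or_ge n k with h | h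
  · rw [B_eq_zero (by omega), B_eq_zero (by omega), B_eq_zero (by omega)]; ring
  rcases eq_or_lt_of_le h with rfl | hlt
  · rw [B_self h0 h1, B_self h0 h1, B_eq_zero (by omega)]
    simp
  obtain ⟨d, rfl⟩ : ∃ d, n = k + d + 1 := ⟨n - k - 1, by omega⟩
  have e1 : k + d + 1 + 1 - (k + 1) = d + 1 := by omega
  have e2 : k + d + 1 - (k + 1) = d := by omega
  have e3 : k + d + 1 - k = d + 1 := by omega
  rw [B, B, B, if_pos (by omega), if_pos (by omega), if_pos (by omega), e1, e2, e3]
  rw [show k + d + 1 + 1 = (k + d + 1) + 1 from rfl, F_succ (k + d + 1), F_succ d, F_succ k]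
  have hFk := (F_pos h0 h1 k).ne'
  have hFd := (F_pos h0 h1 d).ne'
  have hk1 := (one_sub_pow_pos h0 h1 k).ne'
  have hd1 := (one_sub_pow_pos h0 h1 d).ne'
  field_simp
  ring_nf

lemma pascal2 (h0 : 0 < t) (h1 : t < 1) (n k : ℕ) :
    B t (n + 1) (k + 1) = t ^ (k + 1) * B t n (k + 1) + B t n k := by
  rcases lt_or_ge n k with h | h
  · rw [B_eq_zero (by omega), B_eq_zero (by omega), B_eq_zero (by omega)]; ring
  rcases eq_or_lt_of_le h with rfl | hlt
  · rw [B_self h0 h1, B_self h0 h1, B_eq_zero (by omega)]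
    simp
  obtain ⟨d, rfl⟩ : ∃ d, n = k + d + 1 := ⟨n - k - 1, by omega⟩
  have e1 : k + d + 1 + 1 - (k + 1) = d + 1 := by omega
  have e2 : k + d + 1 - (k + 1) = d := by omega
  have e3 : k + d + 1 - k = d + 1 := by omega
  rw [B, B, B, if_pos (by omega), if_pos (by omega), if_pos (by omega), e1, e2, e3]
  rw [show k + d + 1 + 1 = (k + d + 1) + 1 from rfl, F_succ (k + d + 1), F_succ d, F_succ k]
  have hFk := (F_pos h0 h1 k).ne'
  have hFd := (F_pos h0 h1 d).ne'
  have hk1 := (one_sub_pow_pos h0 h1 k).ne'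
  have hd1 := (one_sub_pow_pos h0 h1 d).ne'
  field_simp
  ring_nf



lemma pascalD (h0 : 0 < t) (h1 : t < 1) (N k : ℕ) :
    B t (2*N+2) (k+2) = t^(k+2) * B t (2*N) (k+2)
      + (1 + t^(2*N+1)) * B t (2*N) (k+1) + t^(2*N-k) * B t (2*N) k := by
  rcases lt_or_ge k (2*N) with h | h
  · have h4 : B t (2*N+2) (k+2) = t^(k+2) * B t (2*N+1) (k+2) + B t (2*N+1) (k+1) :=
      pascal2 h0 h1 (2*N+1) (k+1)
    have h2 : B t (2*N+1) (k+2) = B t (2*N) (k+2) + t^(2*N-(k+1)) * B t (2*N) (k+1) :=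
      pascal1 h0 h1 (2*N) (k+1)
    have h3 : B t (2*N+1) (k+1) = B t (2*N) (k+1) + t^(2*N-k) * B t (2*N) k :=
      pascal1 h0 h1 (2*N) k
    rw [h4, h2, h3]
    have he : t^(k+2) * t^(2*N-(k+1)) = t^(2*N+1) := by
      rw [← pow_add]; congr 1; omega
    linear_combination (B t (2*N) (k+1)) * he
  · rcases eq_or_lt_of_le h with rfl | hlt
    · rw [show 2*N+2 = (2*N)+2 from rfl]
      rw [B_self h0 h1, B_self h0 h1, B_eq_zero (by omega), B_eq_zero (by omega),
        Nat.sub_self]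
      ring
    · rw [B_eq_zero (by omega), B_eq_zero (by omega), B_eq_zero (by omega),
        B_eq_zero (by omega)]
      ring

noncomputable def c (q : ℝ) (N k : ℕ) : ℝ := q ^ (((k:ℤ) - N)^2) * B (q^2) (2*N) k

lemma ht0 (hq0 : 0 < q) : 0 < q^2 := by positivity
lemma ht1 (hq0 : 0 < q) (hq1 : q < 1) : q^2 < 1 := by nlinarith

lemma c_zz (hq0 : 0 < q) : c q 0 0 = 1 := by
  simp [c, B, F_zero]

lemma c_top (hq0 : 0 < q) {N k : ℕ} (h : 2*N < k) : c q N k = 0 := by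
  simp [c, B_eq_zero h]

lemma qpow_helper (hq : 0 < q) {a b : ℤ} {m n : ℕ} (h : a + 2 * (m:ℤ) = (n:ℤ) + b) :
    q ^ a * (q^2)^m = q^(n:ℕ) * q ^ b := by
  have hq' : q ≠ 0 := hq.ne'
  have e1 : (q^2)^m = q ^ ((2*(m:ℤ))) := by
    rw [← pow_mul, ← zpow_natCast q (2*m)]
    norm_cast
  have e2 : q ^ (n:ℕ) = q ^ ((n:ℤ)) := (zpow_natCast q n).symm
  rw [e1, e2, ← zpow_add₀ hq', ← zpow_add₀ hq', h]

lemma cRec0 (hq0 : 0 < q) (hq1 : q < 1) (N : ℕ) :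
    c q (N+1) 0 = q^(2*N+1) * c q N 0 := by
  unfold c
  rw [show 2*(N+1) = (2*N+1)+1 from by omega]
  rw [B_zero_right (ht0 hq0) (ht1 hq0 hq1), B_zero_right (ht0 hq0) (ht1 hq0 hq1)]
  rw [mul_one, mul_one]
  rw [← zpow_natCast q (2*N+1), ← zpow_add₀ hq0.ne']
  congr 1
  push_cast
  ring

lemma cRec1 (hq0 : 0 < q) (hq1 : q < 1) (N : ℕ) :
    c q (N+1) 1 = q^(2*N+1) * c q N 1 + (1 + q^(4*N+2)) * c q N 0 := by
  have h0 := ht0 hq0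
  have h1 := ht1 hq0 hq1
  unfold c
  rw [show 2*(N+1) = (2*N+1)+1 from by omega]
  have hB : B (q^2) (2*N+1+1) 1 = (q^2) * B (q^2) (2*N) 1 + ((q^2)^(2*N+1) + 1) := by
    have e1 : B (q^2) (2*N+1+1) (0+1) = (q^2)^(0+1) * B (q^2) (2*N+1) (0+1) + B (q^2) (2*N+1) 0 :=
      pascal2 h0 h1 (2*N+1) 0
    have e2 : B (q^2) (2*N+1) (0+1) = B (q^2) (2*N) (0+1) + (q^2)^(2*N-0) * B (q^2) (2*N) 0 :=
      pascal1 h0 h1 (2*N) 0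
    simp only [Nat.zero_add, Nat.sub_zero] at e1 e2
    rw [e1, e2, B_zero_right h0 h1, B_zero_right h0 h1]
    ring
  rw [hB, B_zero_right h0 h1]
  have T1 : q ^ (((1:ℤ) - (N+1:ℕ))^2) * (q^2) = q^(2*N+1) * q ^ (((1:ℤ) - (N:ℕ))^2) := by
    have := qpow_helper (m := 1) (n := 2*N+1) hq0
      (a := ((1:ℤ) - (N+1:ℕ))^2) (b := ((1:ℤ) - (N:ℕ))^2) (by push_cast; ring)
    simpa using this
  have T2 : q ^ (((1:ℤ) - (N+1:ℕ))^2) * ((q^2)^(2*N+1) + 1)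
      = (1 + q^(4*N+2)) * q ^ (((0:ℤ) - (N:ℕ))^2) := by
    have he : (((1:ℤ) - (N+1:ℕ))^2) = (((0:ℤ) - (N:ℕ))^2) := by push_cast; ring
    have hp : (q^2)^(2*N+1) = q^(4*N+2) := by rw [← pow_mul]; congr 1; omega
    rw [he, hp]; ring
  calc q ^ (((1:ℤ) - (N+1:ℕ))^2) * (q ^ 2 * B (q ^ 2) (2 * N) 1 + ((q ^ 2) ^ (2 * N + 1) + 1))
      = (q ^ (((1:ℤ) - (N+1:ℕ))^2) * (q^2)) * B (q ^ 2) (2 * N) 1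
        + q ^ (((1:ℤ) - (N+1:ℕ))^2) * ((q^2)^(2*N+1) + 1) := by ring
    _ = _ := by rw [T1, T2]; ring

lemma cRec2 (hq0 : 0 < q) (hq1 : q < 1) (N k : ℕ) :
    c q (N+1) (k+2) = q^(2*N+1) * c q N (k+2) + (1 + q^(4*N+2)) * c q N (k+1)
      + q^(2*N+1) * c q N k := by
  have h0 := ht0 hq0
  have h1 := ht1 hq0 hq1
  unfold c
  rw [show 2*(N+1) = 2*N+2 from by omega]
  rw [pascalD h0 h1 N k]
  set e0 : ℤ := (((k:ℤ)+2) - (N+1:ℕ))^2 with he0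
  have hcast : ((k+2:ℕ):ℤ) - ((N+1:ℕ):ℤ) = ((k:ℤ)+2) - (N+1:ℕ) := by push_cast; ring
  rw [show ((((k+2:ℕ):ℤ) - ((N+1:ℕ):ℤ))^2) = e0 from by rw [hcast]]
  have T1 : q ^ e0 * (q^2)^(k+2) = q^(2*N+1) * q ^ ((((k+2:ℕ):ℤ) - (N:ℕ))^2) := by
    apply qpow_helper hq0; rw [he0]; push_cast; ring
  have T2 : q ^ e0 * (1 + (q^2)^(2*N+1)) = (1 + q^(4*N+2)) * q ^ ((((k+1:ℕ):ℤ) - (N:ℕ))^2) := by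
    have he : e0 = (((k+1:ℕ):ℤ) - (N:ℕ))^2 := by rw [he0]; push_cast; ring
    have hp : (q^2)^(2*N+1) = q^(4*N+2) := by rw [← pow_mul]; congr 1; omega
    rw [he, hp]; ring
  rcases le_or_gt k (2*N) with hk | hk
  · have T3 : q ^ e0 * (q^2)^(2*N-k) = q^(2*N+1) * q ^ (((k:ℕ):ℤ) - (N:ℕ))^2 := by
      apply qpow_helper hq0
      rw [he0]
      have : ((2*N-k : ℕ) : ℤ) = 2*(N:ℤ) - k := by omega
      rw [this]; push_cast; ring
    calc q ^ e0 * ((q^2)^(k+2) * B (q^2) (2*N) (k+2) + (1 + (q^2)^(2*N+1)) * B (q^2) (2*N) (k+1)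
          + (q^2)^(2*N-k) * B (q^2) (2*N) k)
        = (q ^ e0 * (q^2)^(k+2)) * B (q^2) (2*N) (k+2)
          + (q ^ e0 * (1 + (q^2)^(2*N+1))) * B (q^2) (2*N) (k+1)
          + (q ^ e0 * (q^2)^(2*N-k)) * B (q^2) (2*N) k := by ring
      _ = _ := by rw [T1, T2, T3]; ring
  · have hz1 : B (q^2) (2*N) k = 0 := B_eq_zero hk
    have hz2 : B (q^2) (2*N) (k+1) = 0 := B_eq_zero (by omega)
    have hz3 : B (q^2) (2*N) (k+2) = 0 := B_eq_zero (by omega)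
    rw [hz1, hz2, hz3]
    ring


lemma finite_identity (hq0 : 0 < q) (hq1 : q < 1) {z : ℂ} (hz : z ≠ 0) (N : ℕ) :
    ∑ k ∈ Finset.range (2*N+1), (c q N k : ℂ) * z^k
      = z^N * ∏ m ∈ Finset.range N, ((1 + (q:ℂ)^(2*m+1) * z) * (1 + (q:ℂ)^(2*m+1) * z⁻¹)) := by
  induction N with
  | zero => simp [c_zz hq0]
  | succ N ih =>
    set A : ℂ := (q:ℂ)^(2*N+1) with hA
    have key : z * ((1 + A*z) * (1 + A*z⁻¹)) = A + (1+A^2)*z + A*z^2 := by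
      field_simp; ring
    have hrhs : z^(N+1) * ∏ m ∈ Finset.range (N+1),
        ((1 + (q:ℂ)^(2*m+1) * z) * (1 + (q:ℂ)^(2*m+1) * z⁻¹))
        = (A + (1+A^2)*z + A*z^2) * (z^N * ∏ m ∈ Finset.range N,
            ((1 + (q:ℂ)^(2*m+1) * z) * (1 + (q:ℂ)^(2*m+1) * z⁻¹))) := by
      rw [Finset.prod_range_succ, pow_succ, ← key]; ring
    rw [hrhs, ← ih]
    set S : ℂ := ∑ k ∈ Finset.range (2*N+1), (c q N k : ℂ) * z^k with hS
    -- padded sums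
    have pad1 : ∀ (w : ℕ → ℂ), (∀ k, 2*N < k → w k = 0) →
        ∑ k ∈ Finset.range (2*N+3), w k = ∑ k ∈ Finset.range (2*N+1), w k := by
      intro w hw
      rw [show 2*N+3 = (2*N+2)+1 from rfl, Finset.sum_range_succ,
        show 2*N+2 = (2*N+1)+1 from rfl, Finset.sum_range_succ,
        hw _ (by omega), hw _ (by omega), add_zero, add_zero]
    have pad0 : ∀ (w : ℕ → ℂ), (∀ k, 2*N < k → w k = 0) →
        ∑ k ∈ Finset.range (2*N+2), w k = ∑ k ∈ Finset.range (2*N+1), w k := by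
      intro w hw
      rw [show 2*N+2 = (2*N+1)+1 from rfl, Finset.sum_range_succ, hw _ (by omega), add_zero]
    have e1 : A * S = A * (c q N 0 : ℂ) * z^0 + A * (c q N 1 : ℂ) * z^1
        + ∑ k ∈ Finset.range (2*N+1), A * (c q N (k+2) : ℂ) * z^(k+2) := by
      rw [hS, ← pad1 (fun k => (c q N k : ℂ) * z^k)
        (fun k hk => by simp [c_top hq0 hk]),
        show 2*N+3 = (2*N+2)+1 from rfl, Finset.sum_range_succ',
        show 2*N+2 = (2*N+1)+1 from rfl, Finset.sum_range_succ']
      rw [mul_add, mul_add, Finset.mul_sum,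
        Finset.sum_congr rfl (fun k (_ : k ∈ Finset.range (2*N+1)) =>
          (by ring : A * ((c q N (k+1+1) : ℂ) * z^(k+1+1)) = A * (c q N (k+2) : ℂ) * z^(k+2)))]
      ring
    have e2 : ((1+A^2) * z) * S = (1+A^2) * (c q N 0 : ℂ) * z^1
        + ∑ k ∈ Finset.range (2*N+1), (1+A^2) * (c q N (k+1) : ℂ) * z^(k+2) := by
      rw [hS, ← pad0 (fun k => (c q N k : ℂ) * z^k)
        (fun k hk => by simp [c_top hq0 hk]),
        show 2*N+2 = (2*N+1)+1 from rfl, Finset.sum_range_succ']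
      rw [mul_add, Finset.mul_sum,
        Finset.sum_congr rfl (fun k (_ : k ∈ Finset.range (2*N+1)) =>
          (by ring : ((1+A^2) * z) * ((c q N (k+1) : ℂ) * z^(k+1))
            = (1+A^2) * (c q N (k+1) : ℂ) * z^(k+2)))]
      ring
    have e3 : (A * z^2) * S = ∑ k ∈ Finset.range (2*N+1), A * (c q N k : ℂ) * z^(k+2) := by
      rw [hS, Finset.mul_sum]
      exact Finset.sum_congr rfl (fun k _ => by ring)
    have lhs_peel : ∑ k ∈ Finset.range (2*(N+1)+1), (c q (N+1) k : ℂ) * z^k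
        = (c q (N+1) 0 : ℂ) * z^0 + (c q (N+1) 1 : ℂ) * z^1
          + ∑ k ∈ Finset.range (2*N+1), (c q (N+1) (k+2) : ℂ) * z^(k+2) := by
      rw [show 2*(N+1)+1 = (2*N+2)+1 from by omega, Finset.sum_range_succ',
        show 2*N+2 = (2*N+1)+1 from rfl, Finset.sum_range_succ']
      rw [Finset.sum_congr rfl (fun k (_ : k ∈ Finset.range (2*N+1)) =>
          (rfl : (c q (N+1) (k+1+1) : ℂ) * z^(k+1+1) = (c q (N+1) (k+2) : ℂ) * z^(k+2)))]
      ring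
    have ecomb : ∀ k ∈ Finset.range (2*N+1), (c q (N+1) (k+2) : ℂ) * z^(k+2)
        = A * (c q N (k+2) : ℂ) * z^(k+2) + (1+A^2) * (c q N (k+1) : ℂ) * z^(k+2)
          + A * (c q N k : ℂ) * z^(k+2) := by
      intro k _
      rw [show c q (N+1) (k+2) = q^(2*N+1) * c q N (k+2) + (1 + q^(4*N+2)) * c q N (k+1)
        + q^(2*N+1) * c q N k from cRec2 hq0 hq1 N k]
      push_cast
      simp only [hA]
      ring
    rw [lhs_peel, Finset.sum_congr rfl ecomb, Finset.sum_add_distrib, Finset.sum_add_distrib,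
      show (A + (1+A^2)*z + A*z^2) * S = A*S + ((1+A^2)*z)*S + (A*z^2)*S from by ring,
      e1, e2, e3,
      show c q (N+1) 0 = q^(2*N+1) * c q N 0 from cRec0 hq0 hq1 N,
      show c q (N+1) 1 = q^(2*N+1) * c q N 1 + (1 + q^(4*N+2)) * c q N 0 from cRec1 hq0 hq1 N]
    push_cast
    simp only [hA]
    ring

section Analytic

variable {x : ℝ}

lemma geom_summable (h0 : 0 < t) (h1 : t < 1) {C : ℝ} :
    Summable (fun m : ℕ => C * t ^ m) :=
  (summable_geometric_of_lt_one h0.le h1).mul_left C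

lemma sumL1 (h0 : 0 < t) (h1 : t < 1) :
    Summable (fun m : ℕ => Real.log (1 - t ^ (m+1))) := by
  apply Summable.of_norm_bounded (geom_summable h0 h1 (C := t / (1-t)))
  intro m
  have hp := one_sub_pow_pos h0 h1 m
  have htm : t ^ (m+1) ≤ t := by
    calc t ^ (m+1) ≤ t ^ 1 := pow_le_pow_of_le_one h0.le h1.le (by omega)
    _ = t := pow_one t
  have hlog : Real.log (1 - t ^ (m+1)) ≤ 0 := by
    apply Real.log_nonpos (by linarith) (by nlinarith [pow_pos h0 (m+1)])
  rw [Real.norm_eq_abs, abs_of_nonpos hlog]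
  have h2 : -Real.log (1 - t^(m+1)) = Real.log (1 - t^(m+1))⁻¹ := (Real.log_inv _).symm
  rw [h2]
  have h3 : Real.log (1 - t^(m+1))⁻¹ ≤ (1 - t^(m+1))⁻¹ - 1 :=
    Real.log_le_sub_one_of_pos (by positivity)
  have h4 : (1 - t^(m+1))⁻¹ - 1 = t^(m+1) / (1 - t^(m+1)) := by field_simp; ring
  have h5 : t^(m+1) / (1 - t^(m+1)) ≤ t^(m+1) / (1 - t) := by
    apply div_le_div_of_nonneg_left (by positivity) (by linarith) (by linarith)
  calc Real.log (1 - t^(m+1))⁻¹ ≤ t^(m+1) / (1 - t^(m+1)) := by rw [← h4]; exact h3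
    _ ≤ t^(m+1) / (1-t) := h5
    _ = t / (1-t) * t^m := by rw [pow_succ]; ring

/-- the real "pair" factor -/
noncomputable def w (q x : ℝ) (m : ℕ) : ℝ :=
  1 + 2 * Real.cos x * q ^ (2*m+1) + q ^ (4*m+2)

lemma w_pos (hq0 : 0 < q) (hq1 : q < 1) (m : ℕ) : 0 < w q x m := by
  have ha0 : 0 < q ^ (2*m+1) := pow_pos hq0 _
  have ha1 : q ^ (2*m+1) < 1 := pow_lt_one₀ hq0.le hq1 (by omega)
  have hsq : q ^ (4*m+2) = (q ^ (2*m+1))^2 := by rw [← pow_mul]; congr 1; omega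
  have hc1 : -1 ≤ Real.cos x := Real.neg_one_le_cos x
  have hc2 : Real.cos x ≤ 1 := Real.cos_le_one x
  rw [w, hsq]
  nlinarith [sq_nonneg (1 - q ^ (2*m+1))]

lemma sumL2 (hq0 : 0 < q) (hq1 : q < 1) :
    Summable (fun m : ℕ => Real.log (w q x m)) := by
  apply Summable.of_norm_bounded (geom_summable hq0 hq1 (C := 3 + 2/(1-q)^2))
  intro m
  have ha0 : 0 < q ^ (2*m+1) := pow_pos hq0 _
  have ha1 : q ^ (2*m+1) < 1 := pow_lt_one₀ hq0.le hq1 (by omega)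
  have haq : q ^ (2*m+1) ≤ q ^ m := pow_le_pow_of_le_one hq0.le hq1.le (by omega)
  have haq' : q ^ (2*m+1) ≤ q := by
    calc q ^ (2*m+1) ≤ q ^ 1 := pow_le_pow_of_le_one hq0.le hq1.le (by omega)
      _ = q := pow_one q
  have hsq : q ^ (4*m+2) = (q ^ (2*m+1))^2 := by rw [← pow_mul]; congr 1; omega
  have hw := w_pos (x := x) hq0 hq1 m
  have hc1 : -1 ≤ Real.cos x := Real.neg_one_le_cos x
  have hc2 : Real.cos x ≤ 1 := Real.cos_le_one x
  have hqm : 0 ≤ q ^ m := by positivity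
  have hwlb : (1 - q ^ (2*m+1))^2 ≤ w q x m := by
    rw [w, hsq]; nlinarith
  have hwub : w q x m ≤ 1 + 3 * q ^ (2*m+1) := by
    rw [w, hsq]; nlinarith
  rw [Real.norm_eq_abs, abs_le]
  constructor
  · -- lower bound : -(C t^m) ≤ log w
    have h1 : Real.log (w q x m)⁻¹ ≤ (w q x m)⁻¹ - 1 :=
      Real.log_le_sub_one_of_pos (by positivity)
    have h2 : (w q x m)⁻¹ - 1 = (1 - w q x m) / w q x m := by field_simp
    have h3 : 1 - w q x m ≤ 2 * q ^ (2*m+1) := by rw [w, hsq]; nlinarith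
    have hq1q : (1-q)^2 ≤ (1 - q ^ (2*m+1))^2 := by nlinarith
    have h4 : (1 - w q x m) / w q x m ≤ 2 * q ^ (2*m+1) / (1-q)^2 := by
      rcases le_or_gt (1 - w q x m) 0 with h | h
      · have : 0 ≤ 2 * q ^ (2*m+1) / (1-q)^2 := by positivity
        have := div_nonpos_of_nonpos_of_nonneg h hw.le
        linarith
      · apply div_le_div₀ (by positivity) h3 (by nlinarith) (by nlinarith)
    have h5 : 2 * q ^ (2*m+1) / (1-q)^2 ≤ 2/(1-q)^2 * q ^ m := by
      rw [div_mul_eq_mul_div, div_le_div_iff₀ (by nlinarith) (by nlinarith)]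
      nlinarith
    have h6 : -Real.log (w q x m) = Real.log (w q x m)⁻¹ := (Real.log_inv _).symm
    have h7 : 0 ≤ 3 * q ^ m := by linarith
    nlinarith [h1, h2 ▸ h1]
  · have h1 : Real.log (w q x m) ≤ w q x m - 1 := Real.log_le_sub_one_of_pos hw
    have h2 : w q x m - 1 ≤ 3 * q ^ (2*m+1) := by linarith
    have h8 : 0 ≤ 2/(1-q)^2 * q^m := by positivity
    nlinarith


noncomputable def Ee (t : ℝ) : ℝ := Real.exp (∑' m : ℕ, Real.log (1 - t^(m+1)))
noncomputable def Ww (q x : ℝ) : ℝ := Real.exp (∑' m : ℕ, Real.log (w q x m))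

lemma Ee_pos : 0 < Ee t := Real.exp_pos _
lemma Ww_pos : 0 < Ww q x := Real.exp_pos _

lemma hasProd_E (h0 : 0 < t) (h1 : t < 1) : HasProd (fun m => 1 - t^(m+1)) (Ee t) := by
  have h := (sumL1 h0 h1).hasSum.rexp
  rwa [show Real.exp ∘ (fun m : ℕ => Real.log (1 - t^(m+1))) = fun m => 1 - t^(m+1) from
    funext fun m => Real.exp_log (one_sub_pow_pos h0 h1 m)] at h

lemma tendsto_F (h0 : 0 < t) (h1 : t < 1) : Tendsto (F t) atTop (𝓝 (Ee t)) :=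
  (hasProd_E h0 h1).tendsto_prod_nat

lemma Ee_le_F (h0 : 0 < t) (h1 : t < 1) (n : ℕ) : Ee t ≤ F t n :=
  le_of_tendsto (tendsto_F h0 h1)
    (eventually_atTop.mpr ⟨n, fun m hm => F_antitone h0 h1 hm⟩)

lemma hasProd_W (hq0 : 0 < q) (hq1 : q < 1) : HasProd (w q x) (Ww q x) := by
  have h := (sumL2 (x := x) hq0 hq1).hasSum.rexp
  rwa [show Real.exp ∘ (fun m : ℕ => Real.log (w q x m)) = w q x from
    funext fun m => Real.exp_log (w_pos hq0 hq1 m)] at h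

lemma tendsto_W (hq0 : 0 < q) (hq1 : q < 1) :
    Tendsto (fun N => ∏ m ∈ Finset.range N, w q x m) atTop (𝓝 (Ww q x)) :=
  (hasProd_W hq0 hq1).tendsto_prod_nat

lemma hasProd_EW (hq0 : 0 < q) (hq1 : q < 1) :
    HasProd (fun m => (1 - (q^2)^(m+1)) * w q x m) (Ee (q^2) * Ww q x) := by
  have h0 := ht0 hq0
  have h1 := ht1 hq0 hq1
  have h := ((sumL1 (t := q^2) h0 h1).hasSum.add (sumL2 (x := x) hq0 hq1).hasSum).rexp
  rw [show Real.exp ∘ (fun m : ℕ => Real.log (1 - (q^2)^(m+1)) + Real.log (w q x m))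
      = fun m => (1 - (q^2)^(m+1)) * w q x m from funext fun m => by
    rw [Function.comp_apply, Real.exp_add, Real.exp_log (one_sub_pow_pos h0 h1 m),
      Real.exp_log (w_pos hq0 hq1 m)]] at h
  rwa [Real.exp_add] at h


lemma sumqZ (hq0 : 0 < q) (hq1 : q < 1) : Summable (fun j : ℤ => q ^ (j.natAbs^2)) := by
  have base : Summable (fun n : ℕ => q ^ (n^2)) := by
    apply Summable.of_norm_bounded (summable_geometric_of_lt_one hq0.le hq1)
    intro n
    rw [Real.norm_eq_abs, abs_of_nonneg (by positivity)]
    exact pow_le_pow_of_le_one hq0.le hq1.le (Nat.le_self_pow two_ne_zero n)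
  apply Summable.of_nat_of_neg
  · simpa using base
  · simpa using base

lemma zfacts : Complex.exp (Complex.I * x) ≠ 0 ∧ ‖Complex.exp (Complex.I * x)‖ = 1 ∧
    Complex.exp (Complex.I * x) + (Complex.exp (Complex.I * x))⁻¹ = 2 * (Real.cos x : ℂ) := by
  refine ⟨Complex.exp_ne_zero _, ?_, ?_⟩
  · rw [Complex.norm_exp]
    simp
  · rw [← Complex.exp_neg, show Complex.I * (x:ℝ) = (x:ℂ) * Complex.I from mul_comm _ _,
      show -((x:ℂ) * Complex.I) = (-(x:ℂ)) * Complex.I from by ring,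
      Complex.exp_mul_I, Complex.exp_mul_I, Complex.cos_neg, Complex.sin_neg,
      Complex.ofReal_cos]
    ring

lemma pair_eq (hq0 : 0 < q) {z : ℂ} (hz : z ≠ 0)
    (hzc : z + z⁻¹ = 2 * (Real.cos x : ℂ)) (m : ℕ) :
    (1 + (q:ℂ)^(2*m+1) * z) * (1 + (q:ℂ)^(2*m+1) * z⁻¹) = ((w q x m : ℝ) : ℂ) := by
  have expand : (1 + (q:ℂ)^(2*m+1) * z) * (1 + (q:ℂ)^(2*m+1) * z⁻¹)
      = 1 + (q:ℂ)^(2*m+1) * (z + z⁻¹) + ((q:ℂ)^(2*m+1))^2 := by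
    field_simp
    ring
  rw [expand, hzc, w]
  push_cast
  rw [show ((q:ℂ)^(2*m+1))^2 = (q:ℂ)^(4*m+2) from by rw [← pow_mul]; congr 1; omega]
  ring

lemma main_tsum (hq0 : 0 < q) (hq1 : q < 1) (x : ℝ) :
    ∑' n : ℤ, ((q ^ (n.natAbs^2) : ℝ) : ℂ) * (Complex.exp (Complex.I * x)) ^ n
      = ((Ee (q^2) * Ww q x : ℝ) : ℂ) := by
  obtain ⟨hz, hz1, hzc⟩ := zfacts (x := x)
  set z := Complex.exp (Complex.I * x) with hzdef
  have h0 := ht0 hq0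
  have h1 := ht1 hq0 hq1
  set E := Ee (q^2) with hE
  have hEpos : 0 < E := Ee_pos
  -- the doubly-indexed family
  set d : ℕ → ℤ → ℂ := fun N j =>
    if j.natAbs ≤ N then ((c q N ((j + N).toNat) : ℝ) : ℂ) * z ^ (j : ℤ) else 0 with hd
  -- step 1 : each tsum equals the partial product of w's
  have step1 : ∀ N : ℕ, ∑' j : ℤ, d N j = ((∏ m ∈ Finset.range N, w q x m : ℝ) : ℂ) := by
    intro N
    rw [tsum_eq_sum (s := Finset.Icc (-(N:ℤ)) (N:ℤ)) (f := d N)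
      (fun j hj => by
        rw [Finset.mem_Icc] at hj
        exact if_neg (fun h => hj (by omega)))]
    have bij : ∑ j ∈ Finset.Icc (-(N:ℤ)) (N:ℤ), d N j
        = ∑ k ∈ Finset.range (2*N+1), (c q N k : ℂ) * z ^ ((k : ℤ) - N) := by
      apply Finset.sum_nbij' (i := fun (j : ℤ) => (j + (N:ℤ)).toNat) (j := fun (k : ℕ) => (k : ℤ) - (N:ℤ))
      · intro j hj; rw [Finset.mem_Icc] at hj; rw [Finset.mem_range]; omega
      · intro k hk; rw [Finset.mem_range] at hk; rw [Finset.mem_Icc]; omega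
      · intro j hj; rw [Finset.mem_Icc] at hj; omega
      · intro k hk; rw [Finset.mem_range] at hk; omega
      · intro j hj
        rw [Finset.mem_Icc] at hj
        simp only [hd]
        rw [if_pos (show j.natAbs ≤ N by omega)]
        congr 2
        omega
    rw [bij]
    have zsplit : ∀ k ∈ Finset.range (2*N+1),
        (c q N k : ℂ) * z ^ ((k : ℤ) - N) = (z ^ (N:ℕ))⁻¹ * ((c q N k : ℂ) * z ^ (k:ℕ)) := by
      intro k _
      rw [zpow_sub₀ hz, zpow_natCast, zpow_natCast]
      field_simp
    rw [Finset.sum_congr rfl zsplit, ← Finset.mul_sum, finite_identity hq0 hq1 hz N,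
      inv_mul_cancel_left₀ (pow_ne_zero _ hz)]
    rw [Complex.ofReal_prod]
    exact Finset.prod_congr rfl fun m _ => pair_eq (x := x) hq0 hz hzc m
  -- step 2 : dominated convergence
  have step2 : Tendsto (fun N => ∑' j : ℤ, d N j) atTop
      (𝓝 (∑' j : ℤ, ((q ^ (j.natAbs^2) / E : ℝ) : ℂ) * z ^ (j:ℤ))) := by
    apply tendsto_tsum_of_dominated_convergence
      (bound := fun j : ℤ => q ^ (j.natAbs^2) * (1/(E * E)))
    · exact (sumqZ hq0 hq1).mul_right _
    · intro j
      -- pointwise limit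
      have hcomp1 : Tendsto (fun N : ℕ => (j + N).toNat) atTop atTop :=
        tendsto_atTop.2 fun b => eventually_atTop.2 ⟨b + j.natAbs, fun N hN => by omega⟩
      have hcomp2 : Tendsto (fun N : ℕ => ((N:ℤ) - j).toNat) atTop atTop :=
        tendsto_atTop.2 fun b => eventually_atTop.2 ⟨b + j.natAbs, fun N hN => by omega⟩
      have hcomp3 : Tendsto (fun N : ℕ => 2*N) atTop atTop :=
        tendsto_atTop.2 fun b => eventually_atTop.2 ⟨b, fun N hN => by omega⟩
      have hr : Tendsto (fun N : ℕ => q ^ (j.natAbs^2) *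
          (F (q^2) (2*N) / (F (q^2) ((j + N).toNat) * F (q^2) (((N:ℤ) - j).toNat))))
          atTop (𝓝 (q ^ (j.natAbs^2) * (E / (E * E)))) := by
        apply Tendsto.const_mul
        exact ((tendsto_F h0 h1).comp hcomp3).div
          (((tendsto_F h0 h1).comp hcomp1).mul ((tendsto_F h0 h1).comp hcomp2))
          (by positivity)
      have hev : ∀ᶠ N : ℕ in atTop, (fun N => ((q ^ (j.natAbs^2) *
          (F (q^2) (2*N) / (F (q^2) ((j + N).toNat) * F (q^2) (((N:ℤ) - j).toNat))) : ℝ) : ℂ)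
            * z ^ (j:ℤ)) N = d N j := by
        rw [eventually_atTop]
        refine ⟨j.natAbs, fun N hN => ?_⟩
        have hN' : j.natAbs ≤ N := hN
        simp only [hd]
        rw [if_pos hN']
        congr 2
        rw [c, B, if_pos (by omega)]
        have hk : (((j + N).toNat : ℤ)) - (N:ℤ) = j := by omega
        have hk2 : 2*N - (j + N).toNat = ((N:ℤ) - j).toNat := by omega
        rw [hk2]
        have hzp : q ^ ((((j + N).toNat : ℤ) - (N:ℤ))^2) = q ^ (j.natAbs^2) := by
          rw [hk, ← zpow_natCast q (j.natAbs^2)]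
          congr 1
          rw [Nat.cast_pow, Int.natAbs_sq]
        rw [hzp]
      apply Tendsto.congr' hev
      have : Tendsto (fun N : ℕ => ((q ^ (j.natAbs^2) *
          (F (q^2) (2*N) / (F (q^2) ((j + N).toNat) * F (q^2) (((N:ℤ) - j).toNat))) : ℝ) : ℂ))
          atTop (𝓝 ((q ^ (j.natAbs^2) * (E / (E * E)) : ℝ) : ℂ)) :=
        (Complex.continuous_ofReal.tendsto _).comp hr
      have heq : ((q ^ (j.natAbs^2) * (E / (E * E)) : ℝ) : ℂ)
          = ((q ^ (j.natAbs^2) / E : ℝ) : ℂ) := by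
        congr 1
        field_simp
      exact heq ▸ this.mul_const _
    · -- bound
      refine Eventually.of_forall fun N => fun j => ?_
      simp only [hd]
      split
      · rename_i hjN
        rw [norm_mul, norm_zpow, hz1, one_zpow, mul_one, Complex.norm_real, Real.norm_eq_abs]
        have hc : c q N ((j + N).toNat) = q ^ (j.natAbs^2) * B (q^2) (2*N) ((j + N).toNat) := by
          rw [c]
          congr 1
          have hk : (((j + N).toNat : ℤ)) - (N:ℤ) = j := by omega
          rw [hk, ← zpow_natCast q (j.natAbs^2)]
          congr 1
          rw [Nat.cast_pow, Int.natAbs_sq]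
        rw [hc, abs_of_nonneg (mul_nonneg (by positivity) (B_nonneg h0 h1 _ _))]
        apply mul_le_mul_of_nonneg_left _ (by positivity)
        exact B_le h0 h1 hEpos (Ee_le_F h0 h1) _ _
      · rw [norm_zero]
        positivity
  -- combine
  have stepA : Tendsto (fun N => ∑' j : ℤ, d N j) atTop (𝓝 ((Ww q x : ℝ) : ℂ)) := by
    rw [show (fun N => ∑' j : ℤ, d N j)
        = fun N => ((∏ m ∈ Finset.range N, w q x m : ℝ) : ℂ) from funext step1]
    exact (Complex.continuous_ofReal.tendsto _).comp (tendsto_W hq0 hq1)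
  have key : ∑' j : ℤ, ((q ^ (j.natAbs^2) / E : ℝ) : ℂ) * z ^ (j:ℤ) = ((Ww q x : ℝ) : ℂ) :=
    tendsto_nhds_unique step2 stepA
  have expand : ∀ j : ℤ, ((q ^ (j.natAbs^2) / E : ℝ) : ℂ) * z ^ (j:ℤ)
      = (((q ^ (j.natAbs^2) : ℝ) : ℂ) * z ^ (j:ℤ)) * ((E : ℝ) : ℂ)⁻¹ := by
    intro j
    push_cast
    ring
  have hEne : ((E : ℝ) : ℂ) ≠ 0 := by
    simp only [ne_eq, Complex.ofReal_eq_zero]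
    exact hEpos.ne'
  rw [tsum_congr expand, tsum_mul_right, mul_inv_eq_iff_eq_mul₀ hEne] at key
  rw [key, Complex.ofReal_mul]
  ring

end Analytic
end JTP




open Filter Set

/-- The Jacobi triple product, exponential form: for `s > 0` and real `x`, the absolutely
convergent series `∑_{n ∈ ℤ} e^{inx} e^{-n²s}` equals the convergent infinite product
`∏_{m ≥ 1} (1 - e^{-2ms})(1 + 2 cos x · e^{-(2m-1)s} + e^{-(4m-2)s})`. -/
theorem jacobi_triple_product_exponential (s x : ℝ) (hs : 0 < s) :
    (Summable fun n : ℤ =>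
      ‖Complex.exp (Complex.I * (n : ℂ) * (x : ℂ)) * Complex.exp (-(n : ℂ) ^ 2 * (s : ℂ))‖) ∧
    ∃ P : ℝ,
      HasProd (fun m : ℕ =>
        (1 - Real.exp (-(2 * ((m : ℝ) + 1)) * s)) *
          (1 + 2 * Real.cos x * Real.exp (-(2 * ((m : ℝ) + 1) - 1) * s) +
            Real.exp (-(4 * ((m : ℝ) + 1) - 2) * s))) P ∧
      (∑' n : ℤ, Complex.exp (Complex.I * (n : ℂ) * (x : ℂ)) *
          Complex.exp (-(n : ℂ) ^ 2 * (s : ℂ))) = (P : ℂ) := by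
  have hq0 : 0 < Real.exp (-s) := Real.exp_pos _
  have hq1 : Real.exp (-s) < 1 := by
    rw [show (1:ℝ) = Real.exp 0 by simp]
    exact Real.exp_lt_exp.mpr (by linarith)
  set q : ℝ := Real.exp (-s) with hqdef
  obtain ⟨hz, hz1, hzc⟩ := JTP.zfacts (x := x)
  have term_eq : ∀ n : ℤ, Complex.exp (Complex.I * (n:ℂ) * (x:ℂ))
      * Complex.exp (-(n:ℂ)^2 * (s:ℂ))
      = ((q ^ (n.natAbs^2) : ℝ) : ℂ) * (Complex.exp (Complex.I * (x:ℂ))) ^ (n:ℤ) := by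
    intro n
    have e1 : Complex.exp (Complex.I * (n:ℂ) * (x:ℂ))
        = (Complex.exp (Complex.I * (x:ℂ))) ^ (n:ℤ) := by
      rw [show Complex.I * (n:ℂ) * (x:ℂ) = (n:ℂ) * (Complex.I * (x:ℂ)) from by ring,
        Complex.exp_int_mul]
    have hn : ((n.natAbs^2 : ℕ) : ℂ) = (n:ℂ)^2 := by
      have h' : ((n.natAbs^2 : ℕ) : ℤ) = n^2 := by rw [Nat.cast_pow, Int.natAbs_sq]
      calc ((n.natAbs^2 : ℕ) : ℂ) = (((n.natAbs^2 : ℕ) : ℤ) : ℂ) := by norm_cast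
        _ = ((n^2 : ℤ) : ℂ) := by rw [h']
        _ = (n:ℂ)^2 := by push_cast; ring
    have e2 : Complex.exp (-(n:ℂ)^2 * (s:ℂ)) = ((q ^ (n.natAbs^2) : ℝ) : ℂ) := by
      rw [show -(n:ℂ)^2 * (s:ℂ) = ((n.natAbs^2 : ℕ) : ℂ) * (((-s : ℝ) : ℂ)) from by
          rw [hn]; push_cast; ring,
        Complex.exp_nat_mul, ← Complex.ofReal_exp, hqdef]
      norm_cast
    rw [e1, e2]
    ring
  constructor
  · have hnorm : (fun n : ℤ => ‖Complex.exp (Complex.I * (n:ℂ) * (x:ℂ))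
        * Complex.exp (-(n:ℂ)^2 * (s:ℂ))‖) = fun n : ℤ => q ^ (n.natAbs^2) := by
      funext n
      rw [term_eq n, norm_mul, Complex.norm_real, norm_zpow, hz1, one_zpow, mul_one,
        Real.norm_eq_abs, abs_of_nonneg (by positivity)]
    rw [hnorm]
    exact JTP.sumqZ hq0 hq1
  · refine ⟨JTP.Ee (q^2) * JTP.Ww q x, ?_, ?_⟩
    · have factor_eq : (fun m : ℕ =>
          (1 - Real.exp (-(2 * ((m : ℝ) + 1)) * s)) *
            (1 + 2 * Real.cos x * Real.exp (-(2 * ((m : ℝ) + 1) - 1) * s) +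
              Real.exp (-(4 * ((m : ℝ) + 1) - 2) * s)))
          = fun m : ℕ => (1 - (q^2)^(m+1)) * JTP.w q x m := by
        funext m
        have a1 : Real.exp (-(2 * ((m : ℝ) + 1)) * s) = (q^2)^(m+1) := by
          rw [show -(2 * ((m : ℝ) + 1)) * s = ((2*(m+1) : ℕ) : ℝ) * (-s) from by
            push_cast; ring, Real.exp_nat_mul, ← hqdef, ← pow_mul]
        have a2 : Real.exp (-(2 * ((m : ℝ) + 1) - 1) * s) = q^(2*m+1) := by
          rw [show -(2 * ((m : ℝ) + 1) - 1) * s = ((2*m+1 : ℕ) : ℝ) * (-s) from by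
            push_cast; ring, Real.exp_nat_mul, ← hqdef]
        have a3 : Real.exp (-(4 * ((m : ℝ) + 1) - 2) * s) = q^(4*m+2) := by
          rw [show -(4 * ((m : ℝ) + 1) - 2) * s = ((4*m+2 : ℕ) : ℝ) * (-s) from by
            push_cast; ring, Real.exp_nat_mul, ← hqdef]
        rw [a1, a2, a3, JTP.w]
      rw [factor_eq]
      exact JTP.hasProd_EW hq0 hq1
    · rw [tsum_congr term_eq]
      exact JTP.main_tsum hq0 hq1 x
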